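/- Let (M,d) be a metric space, X a finite subset containing at most z outliers, C* a set of centers with every inlier at distance at most r_max from C*, and let o be an outlier whose 2z-th nearest-neighbor distance in X is at most 2·r_max. Then d(o, C*) ≤ 3·r_max. -/
import Mathlib

theorem stmt_19 {M : Type*} [MetricSpace M] [DecidableEq M]
    (X Z : Finset M) (hZX : Z ⊆ X) (z : ℕ) (hz : 0 < z) (hZ : Z.card ≤ z)
    (h2z : 2*z ≤ X.card)
    (Cs : Finset M) (hCs : Cs.Nonempty) (rmax : ℝ)
    (hin : ∀ x ∈ X \ Z, Metric.infDist x (↑Cs : Set M) ≤ rmax)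
    (o : M) (ho : o ∈ Z)
    (hro : ((X.val.map fun y => dist o y).sort (· ≤ ·)).getD (2*z - 1) 0 ≤ 2 * rmax) :
    Metric.infDist o (↑Cs : Set M) ≤ 3 * rmax := by
  set f : M → ℝ := fun y => dist o y with hf
  set l := (X.val.map f).sort (· ≤ ·) with hl
  have hlen : l.length = X.card := by
    rw [hl, Multiset.length_sort, Multiset.card_map]; rfl
  have hsorted : l.Pairwise (· ≤ ·) := Multiset.pairwise_sort _ _
  have hidx : 2*z - 1 < l.length := by omega
  have hgetD : l.getD (2*z-1) 0 = l.get ⟨2*z-1, hidx⟩ := by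
    rw [List.getD_eq_getElem l 0 hidx]; simp
  -- elements of take (2z) are ≤ 2*rmax
  have htake : ∀ a ∈ l.take (2*z), a ≤ 2*rmax := by
    intro a ha
    obtain ⟨i, hi, hia⟩ := List.mem_take_iff_getElem.mp ha
    have hi' : i < 2*z := lt_of_lt_of_le hi (min_le_left _ _)
    have hii : i < l.length := by omega
    have hle : l.get ⟨i, hii⟩ ≤ l.get ⟨2*z-1, hidx⟩ :=
      hsorted.rel_get_of_le (by simp; omega)
    calc a = l.get ⟨i, hii⟩ := by rw [← hia]; simp
      _ ≤ l.getD (2*z-1) 0 := by rw [hgetD]; exact hle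
      _ ≤ 2*rmax := hro
  -- count of elements ≤ 2rmax in l is at least 2z
  have hcount : 2*z ≤ l.countP (fun a => decide (a ≤ 2*rmax)) := by
    have h1 : (l.take (2*z)).countP (fun a => decide (a ≤ 2*rmax)) = (l.take (2*z)).length :=
      List.countP_eq_length.mpr (fun a ha => by simpa using htake a ha)
    have h2 : l.countP (fun a => decide (a ≤ 2*rmax)) =
        (l.take (2*z)).countP (fun a => decide (a ≤ 2*rmax)) + (l.drop (2*z)).countP (fun a => decide (a ≤ 2*rmax)) := by
      rw [← List.countP_append, List.take_append_drop]
    rw [h2, h1]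
    have : (l.take (2*z)).length = 2*z := by
      rw [List.length_take]; omega
    omega
  -- transfer to Finset filter
  have hfilter : 2*z ≤ (X.filter (fun y => dist o y ≤ 2*rmax)).card := by
    have hperm : (l : Multiset ℝ) = X.val.map f := Multiset.sort_eq _ _
    have : (X.val.map f).countP (fun a => a ≤ 2*rmax) = l.countP (fun a => decide (a ≤ 2*rmax)) := by
      rw [← hperm]; rfl
    rw [Multiset.countP_map] at this
    have hc : (X.filter (fun y => dist o y ≤ 2*rmax)).card
        = X.val.countP (fun y => dist o y ≤ 2*rmax) := by
      simp [Finset.card_filter, Finset.filter, Multiset.countP_eq_card_filter]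
    rw [hc]
    show 2*z ≤ Multiset.countP (fun a => f a ≤ 2*rmax) X.val
    rw [Multiset.countP_eq_card_filter, this]
    exact hcount
  -- find an inlier x with dist o x ≤ 2rmax
  have hne : ((X.filter (fun y => dist o y ≤ 2*rmax)) \ Z).Nonempty := by
    rw [← Finset.card_pos]
    have := Finset.le_card_sdiff Z (X.filter (fun y => dist o y ≤ 2*rmax))
    have h3 := Finset.card_le_card (Finset.sdiff_subset (s := X.filter (fun y => dist o y ≤ 2*rmax)) (t := Z))
    omega
  obtain ⟨x, hx⟩ := hne
  rw [Finset.mem_sdiff, Finset.mem_filter] at hx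
  obtain ⟨⟨hxX, hxd⟩, hxZ⟩ := hx
  have hxin : Metric.infDist x (↑Cs : Set M) ≤ rmax := hin x (Finset.mem_sdiff.mpr ⟨hxX, hxZ⟩)
  calc Metric.infDist o (↑Cs : Set M) ≤ Metric.infDist x (↑Cs : Set M) + dist o x :=
        Metric.infDist_le_infDist_add_dist
    _ ≤ rmax + 2*rmax := add_le_add hxin hxd
    _ = 3*rmax := by ring
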